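/- (Massart's finite class lemma) If A ⊆ ℝ^n is a finite set with |A| = K and max_{a∈A} ‖a‖_2 ≤ R, then E_σ[max_{a∈A} Σ_{i=1}^n σ_i a_i] ≤ R·sqrt(2 log K), where σ_i are i.i.d. uniform ±1 random variables. -/

import Mathlib

set_option maxHeartbeats 1000000

/-- Massart's finite class lemma: if `A ⊆ ℝ^n` is finite with `|A| = K` and
`max_{a∈A} ‖a‖₂ ≤ R`, then `E_σ[max_{a∈A} ∑ᵢ σᵢ aᵢ] ≤ R √(2 log K)`, where the
`σᵢ` are i.i.d. uniform `±1` variables. -/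
theorem massart_finite_class (n K : ℕ) (A : Finset (Fin n → ℝ)) (hA : A.Nonempty)
    (hK : A.card = K) (R : ℝ) (hR : ∀ a ∈ A, Real.sqrt (∑ i, (a i) ^ 2) ≤ R) :
    (∑ σ : Fin n → Bool,
        A.sup' hA fun a => ∑ i, (if σ i then (1 : ℝ) else -1) * a i)
      / 2 ^ n ≤ R * Real.sqrt (2 * Real.log K) := by
  obtain ⟨a0, ha0⟩ := hA
  have hR0 : 0 ≤ R := le_trans (Real.sqrt_nonneg _) (hR a0 ha0)
  have hK1 : 1 ≤ K := hK ▸ Finset.card_pos.2 ⟨a0, ha0⟩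
  have hKR : (1 : ℝ) ≤ (K : ℝ) := by exact_mod_cast hK1
  have hlogK : 0 ≤ Real.log K := Real.log_nonneg hKR
  have h2n : (0 : ℝ) < 2 ^ n := by positivity
  set g : (Fin n → Bool) → ℝ :=
    fun σ => A.sup' ⟨a0, ha0⟩ fun a => ∑ i, (if σ i then (1 : ℝ) else -1) * a i with hg
  set S : ℝ := ∑ σ : Fin n → Bool, g σ with hS
  -- Key bound for every l > 0
  have key : ∀ l : ℝ, 0 < l → S / 2 ^ n ≤ Real.log K / l + l * R ^ 2 / 2 := by
    intro l hl
    -- Step C: MGF bound for each a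
    have stepC : ∀ a ∈ A,
        ∑ σ : Fin n → Bool, Real.exp (l * ∑ i, (if σ i then (1 : ℝ) else -1) * a i)
          ≤ 2 ^ n * Real.exp (l ^ 2 * R ^ 2 / 2) := by
      intro a ha
      have hsum : ∑ i, (a i) ^ 2 ≤ R ^ 2 := by
        have h1 : 0 ≤ ∑ i, (a i) ^ 2 := Finset.sum_nonneg fun i _ => sq_nonneg _
        have := pow_le_pow_left₀ (Real.sqrt_nonneg _) (hR a ha) 2
        rwa [Real.sq_sqrt h1] at this
      have hexp : ∀ σ : Fin n → Bool,
          Real.exp (l * ∑ i, (if σ i then (1 : ℝ) else -1) * a i)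
            = ∏ i, Real.exp (l * ((if σ i then (1 : ℝ) else -1) * a i)) := by
        intro σ; rw [← Real.exp_sum, Finset.mul_sum]
      calc ∑ σ : Fin n → Bool, Real.exp (l * ∑ i, (if σ i then (1 : ℝ) else -1) * a i)
          = ∑ σ : Fin n → Bool, ∏ i, Real.exp (l * ((if σ i then (1 : ℝ) else -1) * a i)) :=
            Finset.sum_congr rfl fun σ _ => hexp σ
        _ = ∏ i, ∑ b : Bool, Real.exp (l * ((if b then (1 : ℝ) else -1) * a i)) :=
            (Fintype.prod_sum (κ := fun _ : Fin n => Bool)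
              (fun i b => Real.exp (l * ((if b then (1 : ℝ) else -1) * a i)))).symm
        _ = ∏ i, (2 * Real.cosh (l * a i)) := by
            refine Finset.prod_congr rfl fun i _ => ?_
            rw [Fintype.sum_bool, Real.cosh_eq]
            norm_num
            ring_nf
        _ ≤ ∏ i, (2 * Real.exp ((l * a i) ^ 2 / 2)) := by
            refine Finset.prod_le_prod (fun i _ => by positivity) fun i _ => ?_
            have := Real.cosh_le_exp_half_sq (l * a i)
            linarith
        _ = 2 ^ n * Real.exp (∑ i, (l * a i) ^ 2 / 2) := by
            rw [Finset.prod_mul_distrib, Finset.prod_const, Real.exp_sum]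
            simp [Finset.card_univ]
        _ ≤ 2 ^ n * Real.exp (l ^ 2 * R ^ 2 / 2) := by
            have : ∑ i, (l * a i) ^ 2 / 2 ≤ l ^ 2 * R ^ 2 / 2 := by
              have : ∑ i, (l * a i) ^ 2 / 2 = l ^ 2 * (∑ i, (a i) ^ 2) / 2 := by
                rw [← Finset.sum_div]
                congr 1
                rw [Finset.mul_sum]
                exact Finset.sum_congr rfl fun i _ => by ring
              rw [this]
              nlinarith [sq_nonneg l]
            exact mul_le_mul_of_nonneg_left (Real.exp_le_exp.2 this) (by positivity)
    -- Step B: exp of sup bounded by sum of exps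
    have stepB : ∀ σ : Fin n → Bool,
        Real.exp (l * g σ)
          ≤ ∑ a ∈ A, Real.exp (l * ∑ i, (if σ i then (1 : ℝ) else -1) * a i) := by
      intro σ
      obtain ⟨b, hb, hb2⟩ := Finset.exists_mem_eq_sup' ⟨a0, ha0⟩
        (fun a => ∑ i, (if σ i then (1 : ℝ) else -1) * a i)
      rw [hg]
      simp only
      rw [hb2]
      have := Finset.single_le_sum
        (f := fun a : Fin n → ℝ => Real.exp (l * ∑ i, (if σ i then (1 : ℝ) else -1) * a i))
        (fun a _ => (Real.exp_pos _).le) hb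
      simpa using this
    -- Step A: Jensen
    have jensen : Real.exp (l * (S / 2 ^ n)) ≤ (∑ σ : Fin n → Bool, Real.exp (l * g σ)) / 2 ^ n := by
      have hcard : (Fintype.card (Fin n → Bool) : ℝ) = 2 ^ n := by
        simp [Fintype.card_fun]
      have hJ := convexOn_exp.map_sum_le (t := Finset.univ)
        (w := fun _ : Fin n → Bool => (2 ^ n : ℝ)⁻¹) (p := fun σ => l * g σ)
        (fun _ _ => by positivity)
        (by rw [Finset.sum_const, Finset.card_univ, nsmul_eq_mul, hcard]
            field_simp)
        (fun _ _ => Set.mem_univ _)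
      simp only [smul_eq_mul] at hJ
      have hL : ∑ σ : Fin n → Bool, (2 ^ n : ℝ)⁻¹ * (l * g σ) = l * (S / 2 ^ n) := by
        rw [← Finset.mul_sum, ← Finset.mul_sum, hS]
        ring
      have hRt : ∑ σ : Fin n → Bool, (2 ^ n : ℝ)⁻¹ * Real.exp (l * g σ)
          = (∑ σ : Fin n → Bool, Real.exp (l * g σ)) / 2 ^ n := by
        rw [Finset.sum_div]
        refine Finset.sum_congr rfl fun σ _ => by ring
      rw [hL, hRt] at hJ
      exact hJ
    -- Combine
    have combined : Real.exp (l * (S / 2 ^ n)) ≤ K * Real.exp (l ^ 2 * R ^ 2 / 2) := by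
      calc Real.exp (l * (S / 2 ^ n))
          ≤ (∑ σ : Fin n → Bool, Real.exp (l * g σ)) / 2 ^ n := jensen
        _ ≤ (∑ σ : Fin n → Bool, ∑ a ∈ A,
              Real.exp (l * ∑ i, (if σ i then (1 : ℝ) else -1) * a i)) / 2 ^ n := by
            gcongr with σ hσ
            exact stepB σ
        _ = (∑ a ∈ A, ∑ σ : Fin n → Bool,
              Real.exp (l * ∑ i, (if σ i then (1 : ℝ) else -1) * a i)) / 2 ^ n := by
            rw [Finset.sum_comm]
        _ ≤ (∑ _a ∈ A, 2 ^ n * Real.exp (l ^ 2 * R ^ 2 / 2)) / 2 ^ n := by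
            gcongr with a ha2
            exact stepC a ha2
        _ = K * Real.exp (l ^ 2 * R ^ 2 / 2) := by
            rw [Finset.sum_const, hK, nsmul_eq_mul]
            field_simp
      -- done
    have hpos : (0 : ℝ) < K * Real.exp (l ^ 2 * R ^ 2 / 2) := by positivity
    have hlog : l * (S / 2 ^ n) ≤ Real.log K + l ^ 2 * R ^ 2 / 2 := by
      have h1 : l * (S / 2 ^ n) ≤ Real.log (K * Real.exp (l ^ 2 * R ^ 2 / 2)) := by
        have := Real.log_le_log (Real.exp_pos _) combined
        rwa [Real.log_exp] at this
      rwa [Real.log_mul (by positivity) (Real.exp_ne_zero _), Real.log_exp] at h1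
    have hmul : (S / 2 ^ n) * l ≤ (Real.log K / l + l * R ^ 2 / 2) * l := by
      have expand : (Real.log K / l + l * R ^ 2 / 2) * l = Real.log K + l ^ 2 * R ^ 2 / 2 := by
        field_simp
      rw [expand]
      linarith
    exact le_of_mul_le_mul_right hmul hl
  -- Now the final argument
  show S / 2 ^ n ≤ R * Real.sqrt (2 * Real.log K)
  by_cases hRz : R = 0
  · subst hRz
    rw [zero_mul]
    refine le_of_forall_pos_le_add fun ε hε => ?_
    rcases eq_or_lt_of_le hlogK with h0 | h0
    · have h1 := key 1 one_pos
      rw [← h0] at h1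
      calc S / 2 ^ n ≤ 0 / 1 + 1 * 0 ^ 2 / 2 := h1
        _ = 0 := by ring
        _ ≤ 0 + ε := by linarith
    · have hl : 0 < Real.log K / ε + 1 := by positivity
      have := key _ hl
      have h2 : Real.log K / (Real.log K / ε + 1) ≤ ε := by
        rw [div_le_iff₀ hl]
        have : 0 < Real.log K / ε := by positivity
        calc Real.log K = ε * (Real.log K / ε) := by field_simp
          _ ≤ ε * (Real.log K / ε + 1) := by nlinarith
      calc S / 2 ^ n ≤ Real.log K / (Real.log K / ε + 1) + (Real.log K / ε + 1) * 0 ^ 2 / 2 :=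
            this
        _ = Real.log K / (Real.log K / ε + 1) := by ring
        _ ≤ ε := h2
        _ = 0 + ε := by ring
  · have hRpos : 0 < R := lt_of_le_of_ne hR0 (Ne.symm hRz)
    rcases eq_or_lt_of_le hlogK with h0 | h0
    · -- log K = 0
      rw [← h0, mul_zero, Real.sqrt_zero, mul_zero]
      refine le_of_forall_pos_le_add fun ε hε => ?_
      have hl : 0 < 2 * ε / R ^ 2 := by positivity
      have := key _ hl
      rw [← h0] at this
      calc S / 2 ^ n ≤ 0 / (2 * ε / R ^ 2) + (2 * ε / R ^ 2) * R ^ 2 / 2 := this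
        _ = ε := by field_simp; ring
        _ = 0 + ε := by ring
    · -- log K > 0, R > 0 : choose l = sqrt(2 log K) / R
      set s : ℝ := Real.sqrt (2 * Real.log K) with hs
      have hs2 : s ^ 2 = 2 * Real.log K := Real.sq_sqrt (by linarith)
      have hspos : 0 < s := Real.sqrt_pos.2 (by linarith)
      have hl : 0 < s / R := by positivity
      have := key _ hl
      have heq : Real.log K / (s / R) + (s / R) * R ^ 2 / 2 = R * s := by
        have hlogeq : Real.log K = s ^ 2 / 2 := by rw [hs2]; ring
        rw [hlogeq]
        field_simp
        ring
      linarith [this, heq.le]
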